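/- In every MCR game all of whose vertices have finite value, Min has a finite-memory optimal strategy: there exists a finite-memory strategy τ* for Min such that Val(v, τ*) = Val(v) for every vertex v. -/

import Mathlib

open Filter

/-- A two-player turn-based weighted game graph. `owner v = true` means that
vertex `v` belongs to player Max, `owner v = false` that it belongs to player Min.
Every vertex has at least one successor. -/
structure Game (V : Type) where
  owner : V → Bool
  E : V → V → Prop
  nonempty : ∀ v, ∃ v', E v v'
  w : V → V → ℤ

namespace Game

variable {V : Type}

/-- The (reversed) history of the first `k` vertices of `π` (most recent first). -/
def hist (π : ℕ → V) (k : ℕ) : List V := (List.ofFn fun i : Fin k => π i).reverse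

/-- A strategy: given the (reversed) list of previously visited vertices and the current
vertex, it picks a successor of the current vertex. -/
structure Strategy (g : Game V) where
  next : List V → V → V
  valid : ∀ h v, g.E v (next h v)

/-- A memoryless strategy only depends on the current vertex. -/
def Strategy.Memoryless {g : Game V} (s : g.Strategy) : Prop :=
  ∀ h h' v, s.next h v = s.next h' v

/-- A finite-memory strategy is one encoded by a deterministic Moore machine
`⟨M, m0, up, dec⟩`: the choice after a finite play is `dec` applied to the memory state
reached by reading the play (the initial vertex is not read) and to the last vertex. -/
def Strategy.FiniteMemory {g : Game V} (s : g.Strategy) : Prop :=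
  ∃ (M : Type) (_ : Fintype M) (m0 : M) (up : M → V → M) (dec : M → V → V),
    ∀ h v, s.next h v = dec (List.foldl up m0 (((h.reverse ++ [v]).drop 1))) v

variable (g : Game V)

/-- Next vertex chosen by the owner of the current vertex. -/
def step (σ τ : g.Strategy) (h : List V) (v : V) : V :=
  if g.owner v then σ.next h v else τ.next h v

/-- Current vertex and reversed history after `k` steps of the play `Play(v, σ, τ)`. -/
def playAux (σ τ : g.Strategy) (v : V) : ℕ → V × List V
  | 0 => (v, [])
  | k+1 =>
      let p := playAux σ τ v k
      (g.step σ τ p.2 p.1, p.1 :: p.2)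

/-- `Play(v, σ, τ)`: the unique play starting in `v` and conforming to the
strategy `σ` of Max and the strategy `τ` of Min. -/
def play (σ τ : g.Strategy) (v : V) (k : ℕ) : V := (g.playAux σ τ v k).1

/-- An infinite sequence of vertices is a play when consecutive vertices are linked
by edges. -/
def IsPlay (π : ℕ → V) : Prop := ∀ k, g.E (π k) (π (k+1))

/-- A play conforms to a strategy `s` of the player `p` if, whenever the current vertex
belongs to `p`, the next vertex is the one prescribed by `s`. -/
def Conforms (p : Bool) (s : g.Strategy) (π : ℕ → V) : Prop :=
  ∀ k, g.owner (π k) = p → π (k+1) = s.next (hist π k) (π k)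

/-- Total-payoff of the prefix of length `k`: the sum of the first `k` edge weights. -/
def TPfin (π : ℕ → V) (k : ℕ) : ℤ := ∑ i ∈ Finset.range k, g.w (π i) (π (i+1))

/-- Total payoff of an infinite play: `liminf` of the payoffs of its prefixes. -/
noncomputable def TP (π : ℕ → V) : EReal :=
  liminf (fun k => (((g.TPfin π k : ℤ) : ℝ) : EReal)) atTop

/-- Mean payoff of an infinite play. -/
noncomputable def MP (π : ℕ → V) : EReal :=
  liminf (fun k => ((((g.TPfin π k : ℤ) : ℝ) / (k : ℝ)) : EReal)) atTop

open Classical in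
/-- Min-cost reachability payoff with target `t`: total payoff up to the first visit
of `t`, and `+∞` if `t` is never visited. -/
noncomputable def MCR (t : V) (π : ℕ → V) : EReal :=
  if h : ∃ k, π k = t then (((g.TPfin π (Nat.find h) : ℤ) : ℝ) : EReal) else ⊤

open Classical in
/-- `MCR` payoff restricted to reaching the target among the first `i+1` vertices. -/
noncomputable def MCRbd (t : V) (i : ℕ) (π : ℕ → V) : EReal :=
  if ∃ k ≤ i, π k = t then g.MCR t π else ⊤

/-- Value of a strategy `σ` of Max from `v` : `inf_τ P(Play(v, σ, τ))`. -/
noncomputable def valMax (P : (ℕ → V) → EReal) (v : V) (σ : g.Strategy) : EReal :=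
  ⨅ τ : g.Strategy, P (g.play σ τ v)

/-- Value of a strategy `τ` of Min from `v` : `sup_σ P(Play(v, σ, τ))`. -/
noncomputable def valMin (P : (ℕ → V) → EReal) (v : V) (τ : g.Strategy) : EReal :=
  ⨆ σ : g.Strategy, P (g.play σ τ v)

/-- Lower value `Val⁻(v) = sup_σ inf_τ P(Play(v, σ, τ))`. -/
noncomputable def lowerVal (P : (ℕ → V) → EReal) (v : V) : EReal :=
  ⨆ σ : g.Strategy, g.valMax P v σ

/-- Upper value `Val⁺(v) = inf_τ sup_σ P(Play(v, σ, τ))`. -/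
noncomputable def upperVal (P : (ℕ → V) → EReal) (v : V) : EReal :=
  ⨅ τ : g.Strategy, g.valMin P v τ

end Game

/-- A min-cost reachability game: a game together with a target vertex `t` whose only
outgoing edge is a self-loop of weight `0`. -/
structure MCRGame (V : Type) extends Game V where
  t : V
  loop : E t t
  loopOnly : ∀ v, E t v → v = t
  loopZero : w t t = 0

/-- The value of a (determined) MCR game. -/
noncomputable def MCRGame.Val {V : Type} (G : MCRGame V) : V → EReal :=
  fun v => G.toGame.lowerVal (G.toGame.MCR G.t) v

/-- The `i`-step value `val_i(v) = inf_τ sup_σ MCR_i(Play(v, σ, τ))`. -/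
noncomputable def MCRGame.ival {V : Type} (G : MCRGame V) (i : ℕ) : V → EReal :=
  fun v => G.toGame.upperVal (G.toGame.MCRbd G.t i) v


section AuxDev

namespace Game

variable {V : Type}

lemma Strategy.ext' {g : Game V} {s s' : g.Strategy} (h : s.next = s'.next) : s = s' := by
  cases s; cases s'; cases h; rfl

@[simp] lemma play_zero (g : Game V) (σ τ : g.Strategy) (v : V) : g.play σ τ v 0 = v := rfl

lemma playAux_snd_length (g : Game V) (σ τ : g.Strategy) (v : V) (k : ℕ) :
    (g.playAux σ τ v k).2.length = k := by
  induction k with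
  | zero => rfl
  | succ k ih => simp [playAux, ih]

lemma play_succ (g : Game V) (σ τ : g.Strategy) (v : V) (k : ℕ) :
    g.play σ τ v (k+1) = g.step σ τ (g.playAux σ τ v k).2 (g.play σ τ v k) := rfl

lemma play_edge (g : Game V) (σ τ : g.Strategy) (v : V) (k : ℕ) :
    g.E (g.play σ τ v k) (g.play σ τ v (k+1)) := by
  rw [play_succ]
  unfold step
  split
  · exact σ.valid _ _
  · exact τ.valid _ _

/-- shift a strategy by one initial vertex `u`. -/
def shiftStrat {g : Game V} (s : g.Strategy) (u : V) : g.Strategy :=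
  ⟨fun h x => s.next (h ++ [u]) x, fun h v => s.valid _ _⟩

noncomputable def anySucc (g : Game V) (v : V) : V := Classical.choose (g.nonempty v)

lemma anySucc_edge (g : Game V) (v : V) : g.E v (g.anySucc v) := Classical.choose_spec _

/-- prepend a first move (given by `f`) to a strategy. -/
noncomputable def prepend {g : Game V} (f : V → V) (hf : ∀ x, g.E x (f x))
    (s : g.Strategy) : g.Strategy :=
  ⟨fun h x => if h.length = 0 then f x else s.next h.dropLast x, by
    intro h v; split
    · exact hf v
    · exact s.valid _ _⟩

lemma prepend_shift {g : Game V} (f : V → V) (hf : ∀ x, g.E x (f x)) (s : g.Strategy)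
    (u : V) : shiftStrat (prepend f hf s) u = s := by
  apply Strategy.ext'
  funext h x
  show (prepend f hf s).next (h ++ [u]) x = s.next h x
  have h1 : ¬ (h ++ [u]).length = 0 := by simp
  simp only [prepend, if_neg h1, List.dropLast_concat]

lemma playAux_shift (g : Game V) (σ c : g.Strategy) (v : V) (k : ℕ) :
    g.playAux σ c v (k+1) =
      ((g.playAux (shiftStrat σ v) (shiftStrat c v) (g.step σ c [] v) k).1,
       (g.playAux (shiftStrat σ v) (shiftStrat c v) (g.step σ c [] v) k).2 ++ [v]) := by
  induction k with
  | zero => simp [playAux]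
  | succ k ih =>
      show (g.step σ c (g.playAux σ c v (k+1)).2 (g.playAux σ c v (k+1)).1, _) = _
      rw [ih]
      simp only [playAux]
      constructor

lemma play_shift (g : Game V) (σ c : g.Strategy) (v : V) (k : ℕ) :
    g.play σ c v (k+1) =
      g.play (shiftStrat σ v) (shiftStrat c v) (g.step σ c [] v) k := by
  unfold play
  rw [playAux_shift]

lemma TPfin_succ (g : Game V) (π : ℕ → V) (k : ℕ) :
    g.TPfin π (k+1) = g.TPfin π k + g.w (π k) (π (k+1)) := by
  unfold TPfin
  rw [Finset.sum_range_succ]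

lemma TPfin_shift (g : Game V) (π π' : ℕ → V) (hs : ∀ k, π (k+1) = π' k) (k : ℕ) :
    g.TPfin π (k+1) = g.w (π 0) (π' 0) + g.TPfin π' k := by
  unfold TPfin
  rw [Finset.sum_range_succ']
  rw [add_comm]
  congr 1
  · rw [hs 0]
  · apply Finset.sum_congr rfl
    intro i _
    rw [hs i, hs (i+1)]

open Classical in
lemma MCR_shift (g : Game V) (t : V) (π π' : ℕ → V) (h0 : π 0 ≠ t)
    (hs : ∀ k, π (k+1) = π' k) :
    g.MCR t π = ((g.w (π 0) (π' 0) : ℝ) : EReal) + g.MCR t π' := by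
  unfold MCR
  by_cases h' : ∃ k, π' k = t
  · have h : ∃ k, π k = t := ⟨Nat.find h' + 1, by rw [hs]; exact Nat.find_spec h'⟩
    rw [dif_pos h, dif_pos h']
    have hfind : Nat.find h = Nat.find h' + 1 := by
      apply le_antisymm
      · exact Nat.find_le (by rw [hs]; exact Nat.find_spec h')
      · obtain ⟨m, hm⟩ : ∃ m, Nat.find h = m + 1 := by
          cases hc : Nat.find h with
          | zero => exact absurd (hc ▸ Nat.find_spec h) h0
          | succ m => exact ⟨m, rfl⟩
        have : π' m = t := by rw [← hs m, ← hm]; exact Nat.find_spec h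
        have h2 : Nat.find h' ≤ m := Nat.find_le this
        omega
    rw [hfind, TPfin_shift g π π' hs]
    push_cast
    rfl
  · have h : ¬ ∃ k, π k = t := by
      rintro ⟨k, hk⟩
      cases k with
      | zero => exact h0 hk
      | succ k => exact h' ⟨k, by rw [← hs]; exact hk⟩
    rw [dif_neg h, dif_neg h']
    exact (EReal.coe_add_top _).symm

end Game

/-- order iso of adding a real constant on `EReal`. -/
noncomputable def erealAddIso (r : ℝ) : EReal ≃o EReal where
  toFun x := (r : EReal) + x
  invFun x := ((-r : ℝ) : EReal) + x
  left_inv x := by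
    dsimp only
    rw [← add_assoc, ← EReal.coe_add, neg_add_cancel, EReal.coe_zero, zero_add]
  right_inv x := by
    dsimp only
    rw [← add_assoc, ← EReal.coe_add, add_neg_cancel, EReal.coe_zero, zero_add]
  map_rel_iff' := by
    intro a b
    show (r : EReal) + a ≤ (r : EReal) + b ↔ a ≤ b
    constructor
    · intro h
      have h2 := add_le_add_right h ((-r : ℝ) : EReal)
      rwa [← add_assoc, ← add_assoc, ← EReal.coe_add, neg_add_cancel, EReal.coe_zero,
        zero_add, zero_add] at h2
    · intro h
      exact add_le_add_right h _

lemma ereal_add_iInf {ι : Sort*} (r : ℝ) (f : ι → EReal) :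
    (r : EReal) + ⨅ i, f i = ⨅ i, ((r : EReal) + f i) :=
  (erealAddIso r).map_iInf f

open Classical in
open Game in
lemma valMax_step_le {V : Type} (G : MCRGame V) (σ : G.toGame.Strategy) (v : V)
    (hv : v ≠ G.t) (f : V → V) (hf : ∀ x, G.toGame.E x (f x)) :
    G.toGame.valMax (G.toGame.MCR G.t) v σ ≤
      ((G.w v (if G.owner v then σ.next [] v else f v) : ℝ) : EReal)
        + G.Val (if G.owner v then σ.next [] v else f v) := by
  have hstep : ∀ s : G.toGame.Strategy, G.toGame.step σ (prepend f hf s) [] v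
      = (if G.owner v then σ.next [] v else f v) := by
    intro s
    show (if G.toGame.owner v = true then σ.next [] v else (prepend f hf s).next [] v) = _
    have how : G.toGame.owner v = G.owner v := rfl
    rw [how]
    cases G.owner v
    · simp [prepend]
    · simp
  set v₁ := if G.owner v then σ.next [] v else f v with hv₁
  have key : ∀ τ' : G.toGame.Strategy,
      G.toGame.valMax (G.toGame.MCR G.t) v σ ≤
        ((G.w v v₁ : ℝ) : EReal) + G.toGame.MCR G.t (G.toGame.play (shiftStrat σ v) τ' v₁) := by
    intro τ'
    have hplay : ∀ k, G.toGame.play σ (prepend f hf τ') v (k+1)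
        = G.toGame.play (shiftStrat σ v) τ' v₁ k := by
      intro k
      rw [play_shift, prepend_shift, hstep]
    have h0 : G.toGame.play σ (prepend f hf τ') v 0 = v := rfl
    have hM := MCR_shift G.toGame G.t _ _ (by rw [h0]; exact hv) hplay
    exact le_trans (iInf_le _ (prepend f hf τ')) (le_of_eq hM)
  have h2 : G.toGame.valMax (G.toGame.MCR G.t) v σ ≤ ((G.w v v₁ : ℝ) : EReal)
      + ⨅ τ' : G.toGame.Strategy, G.toGame.MCR G.t (G.toGame.play (shiftStrat σ v) τ' v₁) := by
    rw [ereal_add_iInf]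
    exact le_iInf key
  refine h2.trans (add_le_add_right ?_ _)
  show G.toGame.valMax (G.toGame.MCR G.t) v₁ (shiftStrat σ v) ≤ G.Val v₁
  exact le_iSup (fun σ0 => G.toGame.valMax (G.toGame.MCR G.t) v₁ σ0) (shiftStrat σ v)

open Classical in
open Game in
lemma val_le_min {V : Type} (G : MCRGame V) (v v' : V) (hv : v ≠ G.t)
    (ho : G.owner v = false) (hE : G.toGame.E v v') :
    G.Val v ≤ ((G.w v v' : ℝ) : EReal) + G.Val v' := by
  apply iSup_le
  intro σ
  have hval : ∀ x : V, G.toGame.E x (if x = v then v' else G.toGame.anySucc x) := by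
    intro x
    by_cases hx : x = v
    · subst hx; simpa using hE
    · simpa [hx] using anySucc_edge G.toGame x
  have := valMax_step_le G σ v hv (fun x => if x = v then v' else G.toGame.anySucc x) hval
  simpa [ho] using this

open Game in
lemma val_le_max {V : Type} (G : MCRGame V) (v : V) (hv : v ≠ G.t)
    (ho : G.owner v = true) (σ : G.toGame.Strategy) :
    G.toGame.valMax (G.toGame.MCR G.t) v σ ≤
      ((G.w v (σ.next [] v) : ℝ) : EReal) + G.Val (σ.next [] v) := by
  have := valMax_step_le G σ v hv (fun x => G.toGame.anySucc x) (fun x => anySucc_edge G.toGame x)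
  simpa [ho] using this

namespace MCRAux

open Game

attribute [local instance] Classical.propDecidable

variable {V : Type} [Fintype V]

/-- successors of a vertex -/
noncomputable def succs (g : Game V) (v : V) : Finset V :=
  Finset.univ.filter (fun v' => g.E v v')

lemma mem_succs {g : Game V} {v v' : V} : v' ∈ succs g v ↔ g.E v v' := by
  unfold succs
  rw [Finset.mem_filter]
  simp

lemma succs_nonempty (g : Game V) (v : V) : (succs g v).Nonempty := by
  obtain ⟨v', hv'⟩ := g.nonempty v
  exact ⟨v', mem_succs.mpr hv'⟩

/-- value iteration -/
noncomputable def dp (G : MCRGame V) : ℕ → V → WithTop ℤ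
  | 0 => fun v => if v = G.t then 0 else ⊤
  | (i+1) => fun v =>
      if v = G.t then 0
      else if G.owner v then
        (succs G.toGame v).sup' (succs_nonempty _ v)
          (fun v' => (G.w v v' : WithTop ℤ) + dp G i v')
      else
        (succs G.toGame v).inf' (succs_nonempty _ v)
          (fun v' => (G.w v v' : WithTop ℤ) + dp G i v')

lemma dp_zero (G : MCRGame V) (v : V) :
    dp G 0 v = if v = G.t then 0 else ⊤ := rfl

lemma dp_succ (G : MCRGame V) (i : ℕ) (v : V) :
    dp G (i+1) v = if v = G.t then 0
      else if G.owner v then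
        (succs G.toGame v).sup' (succs_nonempty _ v)
          (fun v' => (G.w v v' : WithTop ℤ) + dp G i v')
      else
        (succs G.toGame v).inf' (succs_nonempty _ v)
          (fun v' => (G.w v v' : WithTop ℤ) + dp G i v') := rfl

@[simp] lemma dp_t (G : MCRGame V) (i : ℕ) : dp G i G.t = 0 := by
  cases i with
  | zero => rw [dp_zero, if_pos rfl]
  | succ i => rw [dp_succ, if_pos rfl]

lemma dp_antitone (G : MCRGame V) : ∀ i v, dp G (i+1) v ≤ dp G i v := by
  intro i
  induction i with
  | zero =>
      intro v
      by_cases hv : v = G.t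
      · subst hv; simp
      · rw [dp_zero, if_neg hv]
        exact le_top
  | succ i ih =>
      intro v
      by_cases hv : v = G.t
      · subst hv; simp
      · rw [dp_succ G (i+1), dp_succ G i, if_neg hv, if_neg hv]
        by_cases ho : G.owner v
        · rw [if_pos ho, if_pos ho]
          apply Finset.sup'_le
          intro b hb
          exact le_trans (add_le_add_right (ih b) _)
            (Finset.le_sup' (fun v' => (G.w v v' : WithTop ℤ) + dp G i v') hb)
        · rw [if_neg ho, if_neg ho]
          apply Finset.le_inf'
          intro b hb
          exact le_trans (Finset.inf'_le _ hb) (add_le_add_right (ih b) _)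

/-- embedding `WithTop ℤ → EReal`. -/
noncomputable def toE (x : WithTop ℤ) : EReal :=
  Option.elim x ⊤ (fun n => ((n : ℝ) : EReal))

@[simp] lemma toE_top : toE (⊤ : WithTop ℤ) = ⊤ := rfl
@[simp] lemma toE_coe (n : ℤ) : toE (n : WithTop ℤ) = ((n : ℝ) : EReal) := rfl
@[simp] lemma toE_zero : toE (0 : WithTop ℤ) = 0 := by
  have : (0 : WithTop ℤ) = ((0 : ℤ) : WithTop ℤ) := rfl
  rw [this, toE_coe]
  norm_num

lemma toE_mono : Monotone (toE : WithTop ℤ → EReal) := by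
  intro a b h
  induction b with
  | top => exact le_top
  | coe m =>
      induction a with
      | top => simp at h
      | coe n =>
          have : n ≤ m := WithTop.coe_le_coe.mp h
          show ((n : ℝ) : EReal) ≤ ((m : ℝ) : EReal)
          exact_mod_cast this

lemma toE_add (n : ℤ) (x : WithTop ℤ) :
    toE ((n : WithTop ℤ) + x) = ((n : ℝ) : EReal) + toE x := by
  induction x with
  | top =>
      rw [WithTop.add_top, toE_top]
      exact (EReal.coe_add_top _).symm
  | coe m =>
      rw [← WithTop.coe_add, toE_coe, toE_coe]
      push_cast
      rfl

lemma coe_le_toE_iff (n : ℤ) (x : WithTop ℤ) :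
    ((n : ℝ) : EReal) ≤ toE x ↔ (n : WithTop ℤ) ≤ x := by
  induction x with
  | top => simp
  | coe m =>
      rw [toE_coe, WithTop.coe_le_coe]
      exact_mod_cast Iff.rfl

lemma toE_le_coe_iff (n : ℤ) (x : WithTop ℤ) :
    toE x ≤ ((n : ℝ) : EReal) ↔ x ≤ (n : WithTop ℤ) := by
  induction x with
  | top =>
      simp only [toE_top, top_le_iff]
      constructor
      · intro h
        exact (EReal.coe_ne_top _ h).elim
      · intro h
        exact absurd h (by simp)
  | coe m =>
      rw [toE_coe, WithTop.coe_le_coe]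
      exact_mod_cast Iff.rfl

lemma toE_ne_top {x : WithTop ℤ} (h : toE x ≠ ⊤) : x ≠ ⊤ := by
  induction x with
  | top => exact absurd rfl h
  | coe m => simp

/-- Lemma B : the value is a lower bound for value iteration. -/
lemma val_le_dp (G : MCRGame V) : ∀ i v, G.Val v ≤ toE (dp G i v) := by
  have val_t : G.Val G.t ≤ 0 := by
    apply iSup_le
    intro σ
    set τ0 : G.toGame.Strategy :=
      ⟨fun _ x => G.toGame.anySucc x, fun h v => anySucc_edge G.toGame v⟩ with hτ0
    refine le_trans (iInf_le _ τ0) ?_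
    have hex : ∃ k, G.toGame.play σ τ0 G.t k = G.t := ⟨0, rfl⟩
    have : G.toGame.MCR G.t (G.toGame.play σ τ0 G.t) = 0 := by
      unfold Game.MCR
      rw [dif_pos hex]
      have h0 : Nat.find hex = 0 := by
        rw [Nat.find_eq_zero]
        rfl
      rw [h0]
      show (((G.toGame.TPfin _ 0 : ℤ) : ℝ) : EReal) = 0
      norm_num [Game.TPfin]
    rw [this]
  intro i
  induction i with
  | zero =>
      intro v
      by_cases hv : v = G.t
      · subst hv
        rw [dp_zero, if_pos rfl, toE_zero]
        exact val_t
      · rw [dp_zero, if_neg hv, toE_top]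
        exact le_top
  | succ i ih =>
      intro v
      by_cases hv : v = G.t
      · subst hv
        rw [dp_t, toE_zero]
        exact val_t
      · rw [dp_succ, if_neg hv]
        by_cases ho : G.owner v
        · rw [if_pos ho]
          apply iSup_le
          intro σ
          have hmem : σ.next [] v ∈ succs G.toGame v := mem_succs.mpr (σ.valid [] v)
          refine le_trans (val_le_max G v hv ho σ) ?_
          refine le_trans (add_le_add_right (ih (σ.next [] v)) _) ?_
          rw [← toE_add]
          exact toE_mono (Finset.le_sup' (fun v' => (G.w v v' : WithTop ℤ) + dp G i v') hmem)
        · rw [if_neg ho]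
          obtain ⟨b, hb, heq⟩ := Finset.exists_mem_eq_inf' (succs_nonempty G.toGame v)
            (fun v' => (G.w v v' : WithTop ℤ) + dp G i v')
          rw [heq]
          have hEb : G.toGame.E v b := mem_succs.mp hb
          refine le_trans (val_le_min G v b hv (by simpa using ho) hEb) ?_
          rw [toE_add]
          exact add_le_add_right (ih b) _

lemma antitone_stab (u : ℕ → WithTop ℤ) (hu : ∀ i, u (i+1) ≤ u i) (m : ℤ)
    (hm : ∀ i, (m : WithTop ℤ) ≤ u i) : ∃ N, ∀ i, N ≤ i → u i = u N := by
  have hanti : Antitone u := antitone_nat_of_succ_le hu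
  by_cases hT : ∀ i, u i = ⊤
  · exact ⟨0, fun i _ => by rw [hT i, hT 0]⟩
  · push_neg at hT
    obtain ⟨i0, hi0⟩ := hT
    have hne : ∀ j, u (i0 + j) ≠ ⊤ := by
      intro j h
      exact hi0 (top_le_iff.mp (h ▸ hanti (Nat.le_add_right i0 j)))
    have hex : ∀ j, ∃ a : ℤ, u (i0 + j) = (a : WithTop ℤ) := by
      intro j
      obtain ⟨a, ha⟩ := WithTop.ne_top_iff_exists.mp (hne j)
      exact ⟨a, ha.symm⟩
    set S : Set ℕ := {n | ∃ j, u (i0 + j) = ((m + n : ℤ) : WithTop ℤ)} with hS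
    have hSne : S.Nonempty := by
      obtain ⟨a, ha⟩ := hex 0
      have hma : m ≤ a := by
        have h2 := hm (i0 + 0)
        rw [ha] at h2
        exact WithTop.coe_le_coe.mp h2
      exact ⟨(a - m).toNat, 0, by rw [ha]; congr 1; omega⟩
    obtain ⟨j0, hj0⟩ := Nat.sInf_mem hSne
    refine ⟨i0 + j0, fun i hi => ?_⟩
    obtain ⟨j, hj⟩ : ∃ j, i = i0 + j := ⟨i - i0, by omega⟩
    subst hj
    obtain ⟨a, ha⟩ := hex j
    have h1 : a ≤ m + sInf S := by
      have h3 := hanti (by omega : i0 + j0 ≤ i0 + j)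
      rw [ha, hj0] at h3
      exact_mod_cast WithTop.coe_le_coe.mp h3
    have hma : m ≤ a := by
      have h2 := hm (i0 + j)
      rw [ha] at h2
      exact WithTop.coe_le_coe.mp h2
    have hmem : ((a - m).toNat) ∈ S := ⟨j, by rw [ha]; congr 1; omega⟩
    have h2 := Nat.sInf_le hmem
    have h4 : a = m + sInf S := by omega
    rw [ha, hj0, h4]

lemma exists_fix (G : MCRGame V) (hfin : ∀ v : V, ∃ m : ℤ, G.Val v = ((m : ℝ) : EReal)) :
    ∃ K, ∀ v, dp G (K+1) v = dp G K v := by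
  have hstab : ∀ v : V, ∃ N, ∀ i, N ≤ i → dp G i v = dp G N v := by
    intro v
    obtain ⟨m, hme⟩ := hfin v
    apply antitone_stab (fun i => dp G i v) (fun i => dp_antitone G i v) m
    intro i
    rw [← coe_le_toE_iff, ← hme]
    exact val_le_dp G i v
  choose N hN using hstab
  refine ⟨Finset.univ.sup N, fun v => ?_⟩
  have h1 : N v ≤ Finset.univ.sup N := Finset.le_sup (Finset.mem_univ v)
  rw [hN v _ (by omega), hN v _ h1]

/-- a memoryless optimal choice for Max. -/
noncomputable def maxChoice (G : MCRGame V) (K : ℕ) (v : V) : V :=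
  if v = G.t then G.t
  else Classical.choose (Finset.exists_mem_eq_sup' (succs_nonempty G.toGame v)
    (fun v' => (G.w v v' : WithTop ℤ) + dp G K v'))

lemma maxChoice_edge (G : MCRGame V) (K : ℕ) (v : V) : G.toGame.E v (maxChoice G K v) := by
  unfold maxChoice
  split
  · rename_i h
    rw [h]
    exact G.loop
  · have hspec := Classical.choose_spec (Finset.exists_mem_eq_sup' (succs_nonempty G.toGame v)
      (fun v' => (G.w v v' : WithTop ℤ) + dp G K v'))
    exact mem_succs.mp hspec.1

lemma maxChoice_eq (G : MCRGame V) (K : ℕ) (v : V) (hv : v ≠ G.t) :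
    (succs G.toGame v).sup' (succs_nonempty _ v)
        (fun v' => (G.w v v' : WithTop ℤ) + dp G K v')
      = (G.w v (maxChoice G K v) : WithTop ℤ) + dp G K (maxChoice G K v) := by
  have hspec := Classical.choose_spec (Finset.exists_mem_eq_sup' (succs_nonempty G.toGame v)
      (fun v' => (G.w v v' : WithTop ℤ) + dp G K v'))
  rw [hspec.2]
  unfold maxChoice
  rw [if_neg hv]

/-- the memoryless strategy of Max. -/
noncomputable def sigmaStar (G : MCRGame V) (K : ℕ) : G.toGame.Strategy :=
  ⟨fun _ v => maxChoice G K v, fun _ v => maxChoice_edge G K v⟩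

lemma dp_chain (G : MCRGame V) (K : ℕ) (π : ℕ → V)
    (hstep : ∀ j, dp G K (π j) ≤ (G.w (π j) (π (j+1)) : WithTop ℤ) + dp G K (π (j+1))) :
    ∀ k, dp G K (π 0) ≤ ((G.toGame.TPfin π k : ℤ) : WithTop ℤ) + dp G K (π k) := by
  intro k
  induction k with
  | zero =>
      have h0 : G.toGame.TPfin π 0 = 0 := by simp [Game.TPfin]
      rw [h0]
      simp
  | succ k ih =>
      rw [Game.TPfin_succ]
      push_cast
      refine le_trans ih ?_
      rw [add_assoc]
      exact add_le_add_right (hstep k) _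

lemma dp_step_sigmaStar (G : MCRGame V) (K : ℕ) (hfix : ∀ v, dp G (K+1) v = dp G K v)
    (τ : G.toGame.Strategy) (v : V) (j : ℕ) :
    dp G K (G.toGame.play (sigmaStar G K) τ v j) ≤
      (G.w (G.toGame.play (sigmaStar G K) τ v j)
          (G.toGame.play (sigmaStar G K) τ v (j+1)) : WithTop ℤ)
        + dp G K (G.toGame.play (sigmaStar G K) τ v (j+1)) := by
  generalize hq : G.toGame.play (sigmaStar G K) τ v j = a at *
  generalize hq2 : G.toGame.play (sigmaStar G K) τ v (j+1) = b at *
  have hedge : G.toGame.E a b := by rw [← hq, ← hq2]; exact Game.play_edge _ _ τ v j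
  by_cases ht : a = G.t
  · have ht' : b = G.t := G.loopOnly _ (ht ▸ hedge)
    rw [ht, ht', dp_t, G.loopZero]
    simp
  · by_cases ho : G.owner a
    · have hnext : b = maxChoice G K a := by
        rw [← hq2, Game.play_succ]
        unfold Game.step
        have ho' : G.toGame.owner (G.toGame.play (sigmaStar G K) τ v j) = true := by
          rw [hq]; exact ho
        rw [if_pos ho']
        show maxChoice G K (G.toGame.play (sigmaStar G K) τ v j) = _
        rw [hq]
      conv_lhs => rw [← hfix a]
      rw [dp_succ, if_neg ht, if_pos ho, maxChoice_eq G K _ ht, ← hnext]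
    · have hmem : b ∈ succs G.toGame a := mem_succs.mpr hedge
      conv_lhs => rw [← hfix a]
      rw [dp_succ, if_neg ht, if_neg ho]
      exact Finset.inf'_le (fun v' => (G.w a v' : WithTop ℤ) + dp G K v') hmem

open Classical in
lemma dp_le_val (G : MCRGame V) (K : ℕ) (hfix : ∀ v, dp G (K+1) v = dp G K v) (v : V) :
    toE (dp G K v) ≤ G.Val v := by
  refine le_trans ?_ (le_iSup (fun σ => G.toGame.valMax (G.toGame.MCR G.t) v σ) (sigmaStar G K))
  show toE (dp G K v) ≤ ⨅ τ : G.toGame.Strategy, G.toGame.MCR G.t (G.toGame.play (sigmaStar G K) τ v)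
  apply le_iInf
  intro τ
  unfold Game.MCR
  by_cases hex : ∃ k, G.toGame.play (sigmaStar G K) τ v k = G.t
  · rw [dif_pos hex]
    have hD := dp_chain G K (G.toGame.play (sigmaStar G K) τ v)
      (dp_step_sigmaStar G K hfix τ v) (Nat.find hex)
    have hfind : G.toGame.play (sigmaStar G K) τ v (Nat.find hex) = G.t := Nat.find_spec hex
    rw [hfind, dp_t, add_zero] at hD
    have hp0 : G.toGame.play (sigmaStar G K) τ v 0 = v := rfl
    rw [hp0] at hD
    exact le_trans (toE_mono hD) (le_of_eq (toE_coe _))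
  · rw [dif_neg hex]
    exact le_top

/-- optimal horizon-indexed choice for Min. -/
noncomputable def minChoice (G : MCRGame V) (j : ℕ) (v : V) : V :=
  if v = G.t then G.t
  else Classical.choose (Finset.exists_mem_eq_inf' (succs_nonempty G.toGame v)
    (fun v' => (G.w v v' : WithTop ℤ) + dp G j v'))

lemma minChoice_edge (G : MCRGame V) (j : ℕ) (v : V) : G.toGame.E v (minChoice G j v) := by
  unfold minChoice
  split
  · rename_i h
    rw [h]
    exact G.loop
  · have hspec := Classical.choose_spec (Finset.exists_mem_eq_inf' (succs_nonempty G.toGame v)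
      (fun v' => (G.w v v' : WithTop ℤ) + dp G j v'))
    exact mem_succs.mp hspec.1

lemma minChoice_eq (G : MCRGame V) (j : ℕ) (v : V) (hv : v ≠ G.t) :
    (succs G.toGame v).inf' (succs_nonempty _ v)
        (fun v' => (G.w v v' : WithTop ℤ) + dp G j v')
      = (G.w v (minChoice G j v) : WithTop ℤ) + dp G j (minChoice G j v) := by
  have hspec := Classical.choose_spec (Finset.exists_mem_eq_inf' (succs_nonempty G.toGame v)
      (fun v' => (G.w v v' : WithTop ℤ) + dp G j v'))
  rw [hspec.2]
  unfold minChoice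
  rw [if_neg hv]

/-- the finite-memory strategy of Min. -/
noncomputable def tauStar (G : MCRGame V) (K : ℕ) : G.toGame.Strategy :=
  ⟨fun h v => minChoice G (K - h.length - 1) v, fun h v => minChoice_edge _ _ _⟩

lemma tauStar_finiteMemory (G : MCRGame V) (K : ℕ) : (tauStar G K).FiniteMemory := by
  refine ⟨Fin (K+1), inferInstance, ⟨0, Nat.succ_pos K⟩,
    (fun m _ => ⟨min (m.1+1) K, by omega⟩),
    (fun m v => minChoice G (K - m.1 - 1) v), ?_⟩
  intro h v
  have hfold : ∀ (l : List V) (a : Fin (K+1)),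
      List.foldl (fun (m : Fin (K+1)) (_ : V) => (⟨min (m.1+1) K, by omega⟩ : Fin (K+1))) a l
        = ⟨min (a.1 + l.length) K, by omega⟩ := by
    intro l
    induction l with
    | nil =>
        intro a
        apply Fin.ext
        have := a.isLt
        simp
        omega
    | cons x l ih =>
        intro a
        rw [List.foldl_cons, ih]
        apply Fin.ext
        simp
        omega
  rw [hfold]
  show minChoice G (K - h.length - 1) v
      = minChoice G (K - (min (0 + ((h.reverse ++ [v]).drop 1).length) K) - 1) v
  have hlen : ((h.reverse ++ [v]).drop 1).length = h.length := by simp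
  rw [hlen]
  congr 1
  omega

lemma play_tauStar_succ (G : MCRGame V) (K : ℕ) (σ : G.toGame.Strategy) (v : V) (k : ℕ)
    (ho : ¬ G.owner (G.toGame.play σ (tauStar G K) v k)) :
    G.toGame.play σ (tauStar G K) v (k+1)
      = minChoice G (K - k - 1) (G.toGame.play σ (tauStar G K) v k) := by
  rw [Game.play_succ]
  unfold Game.step
  have ho' : ¬ G.toGame.owner (G.toGame.play σ (tauStar G K) v k) = true := ho
  rw [if_neg ho']
  show minChoice G (K - (G.toGame.playAux σ (tauStar G K) v k).2.length - 1) _ = _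
  rw [Game.playAux_snd_length]

lemma min_reach (G : MCRGame V) (K : ℕ) (σ : G.toGame.Strategy) (v : V) :
    ∀ j k, k + j = K → dp G j (G.toGame.play σ (tauStar G K) v k) ≠ ⊤ →
      ∃ k0, k ≤ k0 ∧ k0 ≤ K ∧ G.toGame.play σ (tauStar G K) v k0 = G.t ∧
        (∀ i, k ≤ i → i < k0 → G.toGame.play σ (tauStar G K) v i ≠ G.t) ∧
        ((G.toGame.TPfin (G.toGame.play σ (tauStar G K) v) k0
            - G.toGame.TPfin (G.toGame.play σ (tauStar G K) v) k : ℤ) : WithTop ℤ)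
          ≤ dp G j (G.toGame.play σ (tauStar G K) v k) := by
  intro j
  induction j with
  | zero =>
      intro k hk hne
      have ht : G.toGame.play σ (tauStar G K) v k = G.t := by
        by_contra hcon
        rw [dp_zero, if_neg hcon] at hne
        exact hne rfl
      refine ⟨k, le_rfl, by omega, ht, fun i h1 h2 => by omega, ?_⟩
      rw [ht, dp_t, sub_self]
      simp
  | succ j ih =>
      intro k hk hne
      by_cases ht : G.toGame.play σ (tauStar G K) v k = G.t
      · refine ⟨k, le_rfl, by omega, ht, fun i h1 h2 => by omega, ?_⟩
        rw [ht, dp_t, sub_self]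
        simp
      · have hedge : G.toGame.E (G.toGame.play σ (tauStar G K) v k)
            (G.toGame.play σ (tauStar G K) v (k+1)) := Game.play_edge _ σ _ v k
        have hle : (G.w (G.toGame.play σ (tauStar G K) v k)
              (G.toGame.play σ (tauStar G K) v (k+1)) : WithTop ℤ)
              + dp G j (G.toGame.play σ (tauStar G K) v (k+1))
            ≤ dp G (j+1) (G.toGame.play σ (tauStar G K) v k) := by
          by_cases ho : G.owner (G.toGame.play σ (tauStar G K) v k)
          · rw [dp_succ, if_neg ht, if_pos ho]
            exact Finset.le_sup'
              (fun v' => (G.w (G.toGame.play σ (tauStar G K) v k) v' : WithTop ℤ) + dp G j v')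
              (mem_succs.mpr hedge)
          · have hnext := play_tauStar_succ G K σ v k ho
            have hj : K - k - 1 = j := by omega
            rw [hj] at hnext
            rw [dp_succ, if_neg ht, if_neg ho, minChoice_eq G j _ ht, ← hnext]
        have hne2 : dp G j (G.toGame.play σ (tauStar G K) v (k+1)) ≠ ⊤ := by
          intro hcon
          rw [hcon, WithTop.add_top] at hle
          exact hne (top_le_iff.mp hle)
        obtain ⟨k0, h1, h2, h3, h4, h5⟩ := ih (k+1) (by omega) hne2
        refine ⟨k0, by omega, h2, h3, ?_, ?_⟩
        · intro i hi1 hi2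
          by_cases hik : i = k
          · rw [hik]; exact ht
          · exact h4 i (by omega) hi2
        · have hTP := Game.TPfin_succ G.toGame (G.toGame.play σ (tauStar G K) v) k
          have hz : (G.toGame.TPfin (G.toGame.play σ (tauStar G K) v) k0
                - G.toGame.TPfin (G.toGame.play σ (tauStar G K) v) k : ℤ)
              = G.w (G.toGame.play σ (tauStar G K) v k) (G.toGame.play σ (tauStar G K) v (k+1))
                + (G.toGame.TPfin (G.toGame.play σ (tauStar G K) v) k0
                    - G.toGame.TPfin (G.toGame.play σ (tauStar G K) v) (k+1)) := by
            rw [hTP]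
            ring
          rw [hz, WithTop.coe_add]
          exact le_trans (add_le_add_right h5 _) hle

open Classical in
lemma valMin_tauStar_le (G : MCRGame V) (K : ℕ) (v : V) (hne : dp G K v ≠ ⊤) :
    G.toGame.valMin (G.toGame.MCR G.t) v (tauStar G K) ≤ toE (dp G K v) := by
  apply iSup_le
  intro σ
  have hne0 : dp G K (G.toGame.play σ (tauStar G K) v 0) ≠ ⊤ := hne
  obtain ⟨k0, h0, hK0, ht0, hmin, hbound⟩ := min_reach G K σ v K 0 (by omega) hne0
  unfold Game.MCR
  have hex : ∃ k, G.toGame.play σ (tauStar G K) v k = G.t := ⟨k0, ht0⟩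
  rw [dif_pos hex]
  have hfind : Nat.find hex = k0 := by
    rw [Nat.find_eq_iff]
    exact ⟨ht0, fun i hi => hmin i (by omega) hi⟩
  rw [hfind]
  have hTP0 : G.toGame.TPfin (G.toGame.play σ (tauStar G K) v) 0 = 0 := by
    simp [Game.TPfin]
  rw [hTP0, sub_zero] at hbound
  have hconv : G.toGame.play σ (tauStar G K) v 0 = v := rfl
  rw [hconv] at hbound
  exact (coe_le_toE_iff _ _).mpr hbound

end MCRAux

end AuxDev

/-- in every MCR game all of whose vertices have finite value, Min has a
finite-memory optimal strategy. -/
theorem statement_13 {V : Type} [Fintype V] (G : MCRGame V)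
    (hfin : ∀ v : V, ∃ m : ℤ, G.Val v = ((m : ℝ) : EReal)) :
    ∃ τ : G.toGame.Strategy, τ.FiniteMemory ∧
      ∀ v : V, G.toGame.valMin (G.toGame.MCR G.t) v τ = G.Val v := by
  obtain ⟨K, hfix⟩ := MCRAux.exists_fix G hfin
  refine ⟨MCRAux.tauStar G K, MCRAux.tauStar_finiteMemory G K, ?_⟩
  intro v
  apply le_antisymm
  · -- valMin τ* ≤ Val
    have hne : MCRAux.dp G K v ≠ ⊤ := by
      intro hcon
      obtain ⟨m, hm⟩ := hfin v
      have h2 := MCRAux.dp_le_val G K hfix v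
      rw [hcon, MCRAux.toE_top, top_le_iff, hm] at h2
      exact EReal.coe_ne_top _ h2
    exact le_trans (MCRAux.valMin_tauStar_le G K v hne) (MCRAux.dp_le_val G K hfix v)
  · -- Val ≤ valMin τ*
    apply iSup_mono
    intro σ
    exact iInf_le _ (MCRAux.tauStar G K)
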